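/- arXiv:2202.09570 — 2 statements merged into one kernel-verified Lean document; each statement's English description precedes it below -/
import Mathlib

section
/- Let P, Q : ℝ → ℝ be polynomials of degree n with positive leading coefficients having a common real root r_0, and write P(r) = (r − r_0)·P̃(r), Q(r) = (r − r_0)·Q̃(r). Then the resultant of P and Q is zero, and the (2n−2)×(2n−2) leading principal minors of the Sylvester-type matrix of (P, Q) equal the corresponding leading principal minors of the Sylvester-type matrix of (P̃, Q̃). -/
open Polynomial Matrix

/-- The 2n×2n interleaved (Routh–Hurwitz style) Sylvester-type matrix of two
coefficient sequences `a b : ℕ → ℝ` given in descending order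
(a j is the coefficient of r^{n-j}). Rows 2k carry `a`, rows 2k+1 carry `b`,
each pair shifted by k. -/
def RHmat (n : ℕ) (a b : ℕ → ℝ) : Matrix (Fin (2 * n)) (Fin (2 * n)) ℝ :=
  Matrix.of fun i j =>
    if i.val / 2 ≤ j.val ∧ j.val ≤ i.val / 2 + n then
      (if i.val % 2 = 0 then a (j.val - i.val / 2) else b (j.val - i.val / 2))
    else 0

/-- The 2k-th order leading principal minor (entries outside the matrix read as 0). -/
def leadMinor {N : ℕ} (M : Matrix (Fin N) (Fin N) ℝ) (k : ℕ) : ℝ :=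
  Matrix.det (Matrix.of fun i j : Fin k =>
    if h : i.val < N ∧ j.val < N then M ⟨i.val, h.1⟩ ⟨j.val, h.2⟩ else 0)

/-- Reflected evaluation sum vanishes at a root. -/
lemma sumZero (n : ℕ) (P : Polynomial ℝ) (r₀ : ℝ) (hd : P.natDegree = n)
    (hr : P.eval r₀ = 0) (s : ℕ) (hs : n ≤ s) :
    ∑ t ∈ Finset.range (n + 1), P.coeff (n - t) * r₀ ^ (s - t) = 0 := by
  have h1 : ∀ t ∈ Finset.range (n + 1),
      P.coeff (n - t) * r₀ ^ (s - t) = r₀ ^ (s - n) * (P.coeff (n - t) * r₀ ^ (n - t)) := by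
    intro t ht
    rw [Finset.mem_range] at ht
    have he : s - t = (s - n) + (n - t) := by omega
    rw [he, pow_add]; ring
  rw [Finset.sum_congr rfl h1, ← Finset.mul_sum]
  have h2 : ∑ t ∈ Finset.range (n + 1), P.coeff (n - t) * r₀ ^ (n - t)
      = ∑ t ∈ Finset.range (n + 1), P.coeff t * r₀ ^ t := by
    have := Finset.sum_range_reflect (fun t => P.coeff t * r₀ ^ t) (n + 1)
    simpa using this
  rw [h2]
  rw [← hd, ← Polynomial.eval_eq_sum_range, hr, mul_zero]

lemma coeffRel (P Pt : Polynomial ℝ) (r₀ : ℝ)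
    (hP : P = (Polynomial.X - Polynomial.C r₀) * Pt) (k : ℕ) (hk : 1 ≤ k) :
    P.coeff k = Pt.coeff (k - 1) - r₀ * Pt.coeff k := by
  obtain ⟨m, rfl⟩ : ∃ m, k = m + 1 := ⟨k - 1, by omega⟩
  rw [hP, sub_mul, Polynomial.coeff_sub, Polynomial.coeff_X_mul, Polynomial.coeff_C_mul]
  simp

/-- Telescoping: partial reflected sums of `P = (X - r₀) * Pt` give coefficients of `Pt`. -/
lemma telesc (n : ℕ) (hn : 1 ≤ n) (P Pt : Polynomial ℝ) (r₀ : ℝ)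
    (hP : P = (Polynomial.X - Polynomial.C r₀) * Pt) (hd : P.natDegree = n) :
    ∀ s, s ≤ n - 1 → ∑ t ∈ Finset.range (s + 1), P.coeff (n - t) * r₀ ^ (s - t)
      = Pt.coeff (n - 1 - s) := by
  have hP0 : P ≠ 0 := by
    intro h; rw [h] at hd; simp at hd; omega
  have hPt0 : Pt ≠ 0 := by
    intro h; rw [h, mul_zero] at hP; exact hP0 hP
  have hXC : (Polynomial.X - Polynomial.C r₀ : Polynomial ℝ) ≠ 0 := Polynomial.X_sub_C_ne_zero r₀
  have hPtdeg : Pt.natDegree = n - 1 := by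
    have h := Polynomial.natDegree_mul hXC hPt0
    rw [← hP, Polynomial.natDegree_X_sub_C] at h
    omega
  intro s
  induction s with
  | zero =>
    intro _
    simp only [zero_add, Finset.sum_range_one, Nat.sub_zero, Nat.zero_sub, pow_zero, mul_one]
    rw [coeffRel P Pt r₀ hP n hn]
    have : Pt.coeff n = 0 := Polynomial.coeff_eq_zero_of_natDegree_lt (by omega)
    rw [this]; ring
  | succ s ih =>
    intro hs
    rw [Finset.sum_range_succ]
    have h1 : ∀ t ∈ Finset.range (s + 1),
        P.coeff (n - t) * r₀ ^ (s + 1 - t) = (P.coeff (n - t) * r₀ ^ (s - t)) * r₀ := by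
      intro t ht
      rw [Finset.mem_range] at ht
      have : s + 1 - t = (s - t) + 1 := by omega
      rw [this, pow_succ]; ring
    rw [Finset.sum_congr rfl h1, ← Finset.sum_mul, ih (by omega)]
    have h2 : P.coeff (n - (s + 1)) = Pt.coeff (n - (s + 1) - 1) - r₀ * Pt.coeff (n - (s + 1)) :=
      coeffRel P Pt r₀ hP _ (by omega)
    have e1 : n - (s + 1) - 1 = n - 1 - (s + 1) := by omega
    have e2 : n - (s + 1) = n - 1 - s := by omega
    have e3 : s + 1 - (s + 1) = 0 := by omega
    rw [e3, pow_zero, mul_one, h2, e1, e2]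
    ring

/-- Sum of a windowed sequence over a large enough range. -/
lemma windowSum (K m e : ℕ) (he : e < K) (g : ℕ → ℝ) :
    ∑ l ∈ Finset.range K, (if m ≤ l ∧ l ≤ e then g l else 0)
      = ∑ t ∈ Finset.range (e + 1 - m), g (m + t) := by
  have h1 : ∀ l ∈ Finset.range K,
      (if m ≤ l ∧ l ≤ e then g l else 0) = (if l ∈ Finset.Icc m e then g l else 0) := by
    intro l _; simp only [Finset.mem_Icc]
  rw [Finset.sum_congr rfl h1, Finset.sum_ite_mem]
  have h2 : Finset.range K ∩ Finset.Icc m e = Finset.Icc m e := by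
    rw [Finset.inter_eq_right]
    intro x hx
    rw [Finset.mem_Icc] at hx
    rw [Finset.mem_range]
    omega
  rw [h2, ← Finset.Ico_add_one_right_eq_Icc, Finset.sum_Ico_eq_sum_range]

/-- Row of the Sylvester-type matrix dotted with powers of a common root is zero. -/
lemma rowSumZero (n m : ℕ) (hn : 1 ≤ n) (hm : m ≤ n - 1) (c : ℕ → ℝ) (r₀ : ℝ)
    (hZ : ∀ s, n ≤ s → ∑ t ∈ Finset.range (n + 1), c t * r₀ ^ (s - t) = 0) :
    ∑ j ∈ Finset.range (2 * n),
      (if m ≤ j ∧ j ≤ m + n then c (j - m) else 0) * r₀ ^ (2 * n - 1 - j) = 0 := by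
  have h1 : ∀ j ∈ Finset.range (2 * n),
      (if m ≤ j ∧ j ≤ m + n then c (j - m) else 0) * r₀ ^ (2 * n - 1 - j)
        = (if m ≤ j ∧ j ≤ m + n then c (j - m) * r₀ ^ (2 * n - 1 - j) else 0) := by
    intro j _; split_ifs <;> simp
  rw [Finset.sum_congr rfl h1, windowSum (2 * n) m (m + n) (by omega)]
  have h2 : m + n + 1 - m = n + 1 := by omega
  rw [h2]
  have h3 : ∀ t ∈ Finset.range (n + 1),
      c (m + t - m) * r₀ ^ (2 * n - 1 - (m + t)) = c t * r₀ ^ ((2 * n - 1 - m) - t) := by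
    intro t ht
    rw [Finset.mem_range] at ht
    have e1 : m + t - m = t := by omega
    have e2 : 2 * n - 1 - (m + t) = (2 * n - 1 - m) - t := by omega
    rw [e1, e2]
  rw [Finset.sum_congr rfl h3, hZ (2 * n - 1 - m) (by omega)]

/-- Key column-operation identity for the minors. -/
lemma colSum (n m J K : ℕ) (hn : 1 ≤ n) (hJ : J < K) (c ct : ℕ → ℝ) (r₀ : ℝ)
    (hT : ∀ s, s ≤ n - 1 → ∑ t ∈ Finset.range (s + 1), c t * r₀ ^ (s - t) = ct s)
    (hZ : ∀ s, n ≤ s → ∑ t ∈ Finset.range (n + 1), c t * r₀ ^ (s - t) = 0) :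
    ∑ l ∈ Finset.range K,
      (if m ≤ l ∧ l ≤ m + n then c (l - m) else 0) * (if l ≤ J then r₀ ^ (J - l) else 0)
      = if m ≤ J ∧ J ≤ m + (n - 1) then ct (J - m) else 0 := by
  by_cases hmJ : m ≤ J
  · by_cases hs : J ≤ m + (n - 1)
    · have h1 : ∀ l ∈ Finset.range K,
          (if m ≤ l ∧ l ≤ m + n then c (l - m) else 0) * (if l ≤ J then r₀ ^ (J - l) else 0)
            = (if m ≤ l ∧ l ≤ J then c (l - m) * r₀ ^ (J - l) else 0) := by
        intro l _
        split_ifs <;> first | rfl | (exfalso; omega) | simp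
      rw [Finset.sum_congr rfl h1, windowSum K m J hJ]
      have h2 : J + 1 - m = (J - m) + 1 := by omega
      rw [h2]
      have h3 : ∀ t ∈ Finset.range ((J - m) + 1),
          c (m + t - m) * r₀ ^ (J - (m + t)) = c t * r₀ ^ ((J - m) - t) := by
        intro t ht
        rw [Finset.mem_range] at ht
        have e1 : m + t - m = t := by omega
        have e2 : J - (m + t) = (J - m) - t := by omega
        rw [e1, e2]
      rw [Finset.sum_congr rfl h3, hT (J - m) (by omega), if_pos ⟨hmJ, hs⟩]
    · have hge : m + n ≤ J := by omega
      have h1 : ∀ l ∈ Finset.range K,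
          (if m ≤ l ∧ l ≤ m + n then c (l - m) else 0) * (if l ≤ J then r₀ ^ (J - l) else 0)
            = (if m ≤ l ∧ l ≤ m + n then c (l - m) * r₀ ^ (J - l) else 0) := by
        intro l _
        split_ifs <;> first | rfl | (exfalso; omega) | simp
      rw [Finset.sum_congr rfl h1, windowSum K m (m + n) (by omega)]
      have h2 : m + n + 1 - m = n + 1 := by omega
      rw [h2]
      have h3 : ∀ t ∈ Finset.range (n + 1),
          c (m + t - m) * r₀ ^ (J - (m + t)) = c t * r₀ ^ ((J - m) - t) := by
        intro t ht
        rw [Finset.mem_range] at ht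
        have e1 : m + t - m = t := by omega
        have e2 : J - (m + t) = (J - m) - t := by omega
        rw [e1, e2]
      rw [Finset.sum_congr rfl h3, hZ (J - m) (by omega), if_neg (by omega)]
  · rw [if_neg (by omega)]
    apply Finset.sum_eq_zero
    intro l _
    split_ifs <;> first | (exfalso; omega) | simp

/-- The minor identity, in terms of abstract coefficient sequences. -/
lemma minorEq (n k : ℕ) (hn : 1 ≤ n) (hk : k ≤ n - 1) (a b at' bt : ℕ → ℝ) (r₀ : ℝ)
    (hTa : ∀ s, s ≤ n - 1 → ∑ t ∈ Finset.range (s + 1), a t * r₀ ^ (s - t) = at' s)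
    (hZa : ∀ s, n ≤ s → ∑ t ∈ Finset.range (n + 1), a t * r₀ ^ (s - t) = 0)
    (hTb : ∀ s, s ≤ n - 1 → ∑ t ∈ Finset.range (s + 1), b t * r₀ ^ (s - t) = bt s)
    (hZb : ∀ s, n ≤ s → ∑ t ∈ Finset.range (n + 1), b t * r₀ ^ (s - t) = 0) :
    leadMinor (RHmat n a b) (2 * k) = leadMinor (RHmat (n - 1) at' bt) (2 * k) := by
  classical
  unfold leadMinor
  set A : Matrix (Fin (2 * k)) (Fin (2 * k)) ℝ :=
    Matrix.of fun i j : Fin (2 * k) =>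
      if h : i.val < 2 * n ∧ j.val < 2 * n then RHmat n a b ⟨i.val, h.1⟩ ⟨j.val, h.2⟩ else 0
    with hAdef
  set B : Matrix (Fin (2 * k)) (Fin (2 * k)) ℝ :=
    Matrix.of fun i j : Fin (2 * k) =>
      if h : i.val < 2 * (n - 1) ∧ j.val < 2 * (n - 1) then
        RHmat (n - 1) at' bt ⟨i.val, h.1⟩ ⟨j.val, h.2⟩ else 0
    with hBdef
  let U : Matrix (Fin (2 * k)) (Fin (2 * k)) ℝ :=
    Matrix.of fun l j : Fin (2 * k) => if l.val ≤ j.val then r₀ ^ (j.val - l.val) else 0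
  have hUtri : U.BlockTriangular id := by
    intro i j hij
    simp only [U, Matrix.of_apply, id] at hij ⊢
    rw [if_neg (by omega)]
  have hUdet : U.det = 1 := by
    rw [Matrix.det_of_upperTriangular hUtri]
    apply Finset.prod_eq_one
    intro i _
    simp [U]
  have hAU : A * U = B := by
    ext i j
    have hi := i.isLt
    have hj := j.isLt
    rw [Matrix.mul_apply]
    set c : ℕ → ℝ := if i.val % 2 = 0 then a else b with hc
    set ct : ℕ → ℝ := if i.val % 2 = 0 then at' else bt with hct
    have hsum : ∀ l : Fin (2 * k), A i l * U l j
        = (if i.val / 2 ≤ l.val ∧ l.val ≤ i.val / 2 + n then c (l.val - i.val / 2) else 0)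
          * (if l.val ≤ j.val then r₀ ^ (j.val - l.val) else 0) := by
      intro l
      have hl := l.isLt
      have hUval : U l j = if l.val ≤ j.val then r₀ ^ (j.val - l.val) else 0 := rfl
      have hAval : A i l
          = if i.val / 2 ≤ l.val ∧ l.val ≤ i.val / 2 + n then c (l.val - i.val / 2) else 0 := by
        rw [hAdef]
        simp only [Matrix.of_apply]
        rw [dif_pos ⟨by omega, by omega⟩]
        rw [hc]
        by_cases hpar : i.val % 2 = 0 <;> simp [RHmat, hpar]
      rw [hAval, hUval]
    rw [Finset.sum_congr rfl (fun l _ => hsum l)]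
    rw [Fin.sum_univ_eq_sum_range (fun L =>
      (if i.val / 2 ≤ L ∧ L ≤ i.val / 2 + n then c (L - i.val / 2) else 0)
        * (if L ≤ j.val then r₀ ^ (j.val - L) else 0)) (2 * k)]
    have hTc : ∀ s, s ≤ n - 1 → ∑ t ∈ Finset.range (s + 1), c t * r₀ ^ (s - t) = ct s := by
      rw [hc, hct]; by_cases hpar : i.val % 2 = 0 <;> simp [hpar] <;> assumption
    have hZc : ∀ s, n ≤ s → ∑ t ∈ Finset.range (n + 1), c t * r₀ ^ (s - t) = 0 := by
      rw [hc]; by_cases hpar : i.val % 2 = 0 <;> simp [hpar] <;> assumption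
    rw [colSum n (i.val / 2) j.val (2 * k) hn hj c ct r₀ hTc hZc]
    rw [hBdef]
    simp only [Matrix.of_apply]
    rw [dif_pos ⟨by omega, by omega⟩]
    rw [hct]
    by_cases hpar : i.val % 2 = 0 <;> simp [RHmat, hpar]
  calc A.det = A.det * U.det := by rw [hUdet, mul_one]
    _ = (A * U).det := (Matrix.det_mul A U).symm
    _ = B.det := by rw [hAU]

/-- If P, Q are real polynomials of degree n with positive leading
coefficients sharing a real root r₀, with P = (X − r₀)·P̃, Q = (X − r₀)·Q̃, then the
resultant (det of the interleaved 2n×2n Sylvester-type matrix) vanishes, and for each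
k ≤ n−1 the 2k-th leading principal minor of the Sylvester-type matrix of (P, Q)
equals that of the Sylvester-type matrix of (P̃, Q̃). -/
theorem stmt6 (n : ℕ) (hn : 1 ≤ n) (P Q Pt Qt : Polynomial ℝ) (r₀ : ℝ)
    (hPdeg : P.natDegree = n) (hQdeg : Q.natDegree = n)
    (hPlead : 0 < P.leadingCoeff) (hQlead : 0 < Q.leadingCoeff)
    (hProot : P.eval r₀ = 0) (hQroot : Q.eval r₀ = 0)
    (hP : P = (Polynomial.X - Polynomial.C r₀) * Pt)
    (hQ : Q = (Polynomial.X - Polynomial.C r₀) * Qt) :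
    (RHmat n (fun j => P.coeff (n - j)) (fun j => Q.coeff (n - j))).det = 0 ∧
    ∀ k : ℕ, k ≤ n - 1 →
      leadMinor (RHmat n (fun j => P.coeff (n - j)) (fun j => Q.coeff (n - j))) (2 * k) =
        leadMinor (RHmat (n - 1) (fun j => Pt.coeff (n - 1 - j))
          (fun j => Qt.coeff (n - 1 - j))) (2 * k) := by
  constructor
  · rw [← Matrix.exists_mulVec_eq_zero_iff]
    refine ⟨fun j => r₀ ^ (2 * n - 1 - j.val), ?_, ?_⟩
    · intro h
      have h1 := congrFun h ⟨2 * n - 1, by omega⟩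
      have h2 : 2 * n - 1 - (2 * n - 1) = 0 := Nat.sub_self _
      simp only [h2, pow_zero] at h1
      exact one_ne_zero h1
    · funext i
      have hi := i.isLt
      show ∑ j : Fin (2 * n),
          RHmat n (fun t => P.coeff (n - t)) (fun t => Q.coeff (n - t)) i j
            * r₀ ^ (2 * n - 1 - j.val) = (0 : ℝ)
      have hsum : ∀ j : Fin (2 * n),
          RHmat n (fun t => P.coeff (n - t)) (fun t => Q.coeff (n - t)) i j
              * r₀ ^ (2 * n - 1 - j.val)
            = (if i.val / 2 ≤ j.val ∧ j.val ≤ i.val / 2 + n then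
                (if i.val % 2 = 0 then P.coeff (n - (j.val - i.val / 2))
                  else Q.coeff (n - (j.val - i.val / 2))) else 0) * r₀ ^ (2 * n - 1 - j.val) :=
        fun j => rfl
      rw [Finset.sum_congr rfl (fun j _ => hsum j)]
      rw [Fin.sum_univ_eq_sum_range (fun J =>
        (if i.val / 2 ≤ J ∧ J ≤ i.val / 2 + n then
            (if i.val % 2 = 0 then P.coeff (n - (J - i.val / 2))
              else Q.coeff (n - (J - i.val / 2))) else 0) * r₀ ^ (2 * n - 1 - J)) (2 * n)]
      by_cases hpar : i.val % 2 = 0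
      · simp only [hpar, if_true, reduceIte]
        exact rowSumZero n (i.val / 2) hn (by omega) (fun t => P.coeff (n - t)) r₀
          (fun s hs => sumZero n P r₀ hPdeg hProot s hs)
      · simp only [hpar, reduceIte]
        exact rowSumZero n (i.val / 2) hn (by omega) (fun t => Q.coeff (n - t)) r₀
          (fun s hs => sumZero n Q r₀ hQdeg hQroot s hs)
  · intro k hk
    exact minorEq n k hn hk _ _ _ _ r₀
      (telesc n hn P Pt r₀ hP hPdeg) (fun s hs => sumZero n P r₀ hPdeg hProot s hs)
      (telesc n hn Q Qt r₀ hQ hQdeg) (fun s hs => sumZero n Q r₀ hQdeg hQroot s hs)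
end

section
/- Suppose two real polynomials P and Q of degree n have resultant zero, the (2n−2)-order leading principal minor ∇_{n−1} of their interleaved Sylvester matrix is nonzero, and r_0 is their unique common root. Then ∇_{n−1}·r_0 + ∇̃ = 0, where ∇̃ is the determinant of the (2n−2)×(2n−2) matrix formed from the first 2n−2 rows, the first 2n−3 columns, and the (2n−1)-th column of the Sylvester matrix. Consequently r_0 = −∇̃/∇_{n−1}. -/
open Polynomial Matrix Finset

/-- The determinant ∇̃ of the (2n−2)×(2n−2) matrix formed from the first 2n−2 rows,
the first 2n−3 columns and the (2n−1)-th column of the 2n×2n matrix M. -/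
def tildeNabla (n : ℕ) (M : Matrix (Fin (2 * n)) (Fin (2 * n)) ℝ) : ℝ :=
  Matrix.det (Matrix.of fun i j : Fin (2 * n - 2) =>
    (fun i' j' : ℕ =>
        if h : i' < 2 * n ∧ j' < 2 * n then M ⟨i', h.1⟩ ⟨j', h.2⟩ else 0)
      i.val (if j.val = 2 * n - 3 then 2 * n - 2 else j.val))

lemma rowsum_aux (n q : ℕ) (hq : q < n) (a : ℕ → ℝ) (r : ℝ) :
    ∑ j ∈ Finset.range (2*n), (if q ≤ j ∧ j ≤ q + n then a (j - q) else 0) * r^(2*n-1-j)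
      = r^(n-1-q) * ∑ l ∈ Finset.range (n+1), a l * r^(n-l) := by
  have h1 : ∑ j ∈ Finset.range (2*n), (if q ≤ j ∧ j ≤ q + n then a (j - q) else 0) * r^(2*n-1-j)
      = ∑ j ∈ Finset.Icc q (q+n), (if q ≤ j ∧ j ≤ q + n then a (j - q) else 0) * r^(2*n-1-j) := by
    refine (Finset.sum_subset ?_ ?_).symm
    · intro x hx
      simp only [Finset.mem_Icc] at hx
      simp only [Finset.mem_range]
      omega
    · intro x _ hx
      simp only [Finset.mem_Icc] at hx
      rw [if_neg (by omega), zero_mul]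
  rw [h1, show Finset.Icc q (q+n) = Finset.Ico q (q+n+1) by rw [Finset.Ico_add_one_right_eq_Icc],
    Finset.sum_Ico_eq_sum_range]
  have h2 : q + n + 1 - q = n + 1 := by omega
  rw [h2, Finset.mul_sum]
  refine Finset.sum_congr rfl ?_
  intro l hl
  simp only [Finset.mem_range] at hl
  rw [if_pos (by omega)]
  have h3 : q + l - q = l := by omega
  have h4 : 2*n-1-(q+l) = (n-1-q) + (n-l) := by omega
  rw [h3, h4, pow_add]
  ring

lemma evalsum (n : ℕ) (P : Polynomial ℝ) (h : P.natDegree = n) (r : ℝ) :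
    ∑ l ∈ Finset.range (n+1), P.coeff (n-l) * r^(n-l) = P.eval r := by
  rw [Polynomial.eval_eq_sum_range' (by omega : P.natDegree < n + 1) r]
  have := Finset.sum_range_reflect (fun l => P.coeff l * r^l) (n+1)
  simpa using this

lemma sum_range_split3 (m : ℕ) (hm : 3 ≤ m) (f : ℕ → ℝ) :
    ∑ j ∈ Finset.range m, f j
      = ∑ j ∈ Finset.range (m-3), f j + f (m-3) + f (m-2) + f (m-1) := by
  have h1 := Finset.sum_range_succ f (m-1)
  have h2 := Finset.sum_range_succ f (m-2)
  have h3 := Finset.sum_range_succ f (m-3)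
  rw [show m-1+1 = m by omega] at h1
  rw [show m-2+1 = m-1 by omega] at h2
  rw [show m-3+1 = m-2 by omega] at h3
  rw [h1, h2, h3]

lemma sum_range_split1 (m : ℕ) (hm : 1 ≤ m) (f : ℕ → ℝ) :
    ∑ j ∈ Finset.range m, f j = ∑ j ∈ Finset.range (m-1), f j + f (m-1) := by
  have h1 := Finset.sum_range_succ f (m-1)
  rw [show m-1+1 = m by omega] at h1
  rw [h1]

set_option maxHeartbeats 1000000 in
/-- If P, Q (real, degree n) have vanishing resultant, nonzero minor
∇ₙ₋₁, and r₀ is their unique common root, then ∇ₙ₋₁·r₀ + ∇̃ = 0,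
i.e. r₀ = −∇̃/∇ₙ₋₁. -/
theorem stmt12 (n : ℕ) (hn : 2 ≤ n) (P Q : Polynomial ℝ)
    (hPdeg : P.natDegree = n) (hQdeg : Q.natDegree = n) (r₀ : ℝ)
    (H : Matrix (Fin (2 * n)) (Fin (2 * n)) ℝ)
    (hH : H = RHmat n (fun j => P.coeff (n - j)) (fun j => Q.coeff (n - j)))
    (hres : H.det = 0) (hminor : leadMinor H (2 * (n - 1)) ≠ 0)
    (hroot : P.eval r₀ = 0 ∧ Q.eval r₀ = 0)
    (huniq : ∀ z : ℂ, Polynomial.aeval z P = 0 → Polynomial.aeval z Q = 0 → z = (r₀ : ℂ)) :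
    leadMinor H (2 * (n - 1)) * r₀ + tildeNabla n H = 0 ∧
      r₀ = -(tildeNabla n H / leadMinor H (2 * (n - 1))) := by
  obtain ⟨hPr, hQr⟩ := hroot
  have hle : 2*(n-1) ≤ 2*n := by omega
  have hent : ∀ (i j : Fin (2*n)), H i j =
      if i.val / 2 ≤ j.val ∧ j.val ≤ i.val / 2 + n then
        (if i.val % 2 = 0 then P.coeff (n - (j.val - i.val / 2))
          else Q.coeff (n - (j.val - i.val / 2))) else 0 := by
    intro i j; rw [hH]; rfl
  set M₁ : Matrix (Fin (2*(n-1))) (Fin (2*(n-1))) ℝ :=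
    Matrix.of (fun i j => H ⟨i.val, lt_of_lt_of_le i.isLt hle⟩ ⟨j.val, lt_of_lt_of_le j.isLt hle⟩)
    with hM₁
  have hlead : leadMinor H (2*(n-1)) = M₁.det := by
    unfold leadMinor
    congr 1
    ext i j
    rw [Matrix.of_apply, dif_pos ⟨lt_of_lt_of_le i.isLt hle, lt_of_lt_of_le j.isLt hle⟩]
    rfl
  set lastIdx : Fin (2*(n-1)) := ⟨2*n-3, by omega⟩ with hlastIdx
  set c₂ : Fin (2*(n-1)) → ℝ :=
    fun i => H ⟨i.val, lt_of_lt_of_le i.isLt hle⟩ ⟨2*n-2, by omega⟩ with hc₂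
  set M₂ : Matrix (Fin (2*(n-1))) (Fin (2*(n-1))) ℝ := M₁.updateCol lastIdx c₂ with hM₂
  have htilde : tildeNabla n H = M₂.det := by
    unfold tildeNabla
    have h22 : 2*(n-1) = 2*n-2 := by omega
    have hre : (Matrix.of fun i j : Fin (2 * n - 2) =>
        (fun i' j' : ℕ =>
            if h : i' < 2 * n ∧ j' < 2 * n then H ⟨i', h.1⟩ ⟨j', h.2⟩ else 0)
          i.val (if j.val = 2 * n - 3 then 2 * n - 2 else j.val))
        = Matrix.reindex (finCongr h22) (finCongr h22) M₂ := by
      ext i j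
      simp only [Matrix.reindex_apply, Matrix.submatrix_apply, Matrix.of_apply, finCongr_symm,
        finCongr_apply, Fin.coe_cast]
      rw [hM₂, Matrix.updateCol_apply]
      by_cases hj : (j : ℕ) = 2*n-3
      · rw [if_pos hj, if_pos (by rw [hlastIdx]; exact Fin.ext hj),
          dif_pos ⟨by omega, by omega⟩]
        rfl
      · rw [if_neg hj, if_neg (by rw [hlastIdx]; exact fun h => hj (congrArg Fin.val h)),
          dif_pos ⟨by omega, by omega⟩]
        rfl
    rw [hre, Matrix.det_reindex_self]
  set D : Matrix (Fin (2*(n-1))) (Fin (2*(n-1))) ℝ :=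
    M₁.updateCol lastIdx (r₀ • (fun i => M₁ i lastIdx) + c₂) with hD
  have hsplit : D.det = r₀ * M₁.det + M₂.det := by
    rw [hD, Matrix.det_updateCol_add, Matrix.det_updateCol_smul,
      Matrix.updateCol_eq_self, hM₂]
  have hc₂zero : r₀ = 0 → ∀ i : Fin (2*(n-1)), c₂ i = 0 := by
    intro h0 i
    rw [hc₂]
    simp only
    rw [hent]
    simp only
    split_ifs with hcond hpar
    · have hiv : i.val < 2*(n-1) := i.isLt
      have hz : n - (2*n-2 - i.val/2) = 0 := by omega
      rw [hz, Polynomial.coeff_zero_eq_eval_zero]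
      exact h0 ▸ hPr
    · have hiv : i.val < 2*(n-1) := i.isLt
      have hz : n - (2*n-2 - i.val/2) = 0 := by omega
      rw [hz, Polynomial.coeff_zero_eq_eval_zero]
      exact h0 ▸ hQr
    · rfl
  have hDzero : D.det = 0 := by
    rcases eq_or_ne r₀ 0 with h0 | h0
    · apply Matrix.det_eq_zero_of_column_eq_zero lastIdx
      intro i
      rw [hD, Matrix.updateCol_apply, if_pos rfl]
      simp only [Pi.add_apply, Pi.smul_apply, h0, smul_eq_mul, zero_mul, zero_add]
      exact hc₂zero h0 i
    · rw [← Matrix.exists_mulVec_eq_zero_iff]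
      refine ⟨fun j => if (j : ℕ) = 2*n-3 then r₀ else r₀^(2*n-1-(j : ℕ)), ?_, ?_⟩
      · intro hg
        apply h0
        have := congrFun hg lastIdx
        simpa [hlastIdx] using this
      · funext i
        show ∑ j, D i j * _ = 0
        set q : ℕ := i.val / 2 with hq
        have hqn : q < n := by
          have := i.isLt
          omega
        set e : ℕ → ℝ := fun j =>
          if q ≤ j ∧ j ≤ q + n then
            (if i.val % 2 = 0 then P.coeff (n - (j - q)) else Q.coeff (n - (j - q))) else 0
          with he
        have hent' : ∀ (j : Fin (2*n)), H ⟨i.val, lt_of_lt_of_le i.isLt hle⟩ j = e (j : ℕ) := by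
          intro j
          rw [hent]
        have hrow : ∑ j ∈ Finset.range (2*n), e j * r₀^(2*n-1-j) = 0 := by
          have haux := rowsum_aux n q hqn
            (fun l => if i.val % 2 = 0 then P.coeff (n - l) else Q.coeff (n - l)) r₀
          rw [he]
          simp only at haux ⊢
          rw [haux]
          rcases Nat.even_or_odd i.val with hpar | hpar
          · have hp0 : i.val % 2 = 0 := Nat.even_iff.mp hpar
            simp only [hp0, reduceIte]
            rw [evalsum n P hPdeg r₀, hPr, mul_zero]
          · have hp0 : i.val % 2 = 1 := Nat.odd_iff.mp hpar
            simp only [hp0, Nat.one_ne_zero, reduceIte]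
            rw [evalsum n Q hQdeg r₀, hQr, mul_zero]
        set F : ℕ → ℝ := fun j' => if j' = 2*n-3 then (r₀ * e (2*n-3) + e (2*n-2)) * r₀
            else e j' * r₀^(2*n-1-j') with hF
        have hterm : ∀ j : Fin (2*(n-1)),
            D i j * (if (j : ℕ) = 2*n-3 then r₀ else r₀^(2*n-1-(j : ℕ))) = F (j : ℕ) := by
          intro j
          by_cases hj : (j : ℕ) = 2*n-3
          · have hjl : j = lastIdx := Fin.ext (by rw [hj, hlastIdx])
            have h1 : M₁ i lastIdx = e (2*n-3) := by
              rw [hM₁, Matrix.of_apply, hent', hlastIdx]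
            have h2 : c₂ i = e (2*n-2) := by
              rw [hc₂]
              simp only
              rw [hent']
            have hv : (lastIdx : ℕ) = 2*n-3 := by rw [hlastIdx]
            rw [hjl, hD, Matrix.updateCol_apply, if_pos rfl, hv, if_pos rfl]
            simp only [hF, eq_self_iff_true, if_true]
            simp only [Pi.add_apply, Pi.smul_apply, smul_eq_mul, h1, h2]
          · have hjl : j ≠ lastIdx := fun h => hj (by rw [h, hlastIdx])
            rw [hD, Matrix.updateCol_apply, if_neg hjl, hF]
            simp only [if_neg hj]
            rw [hM₁, Matrix.of_apply, hent']
        calc ∑ j : Fin (2*(n-1)), D i j * (if (j : ℕ) = 2*n-3 then r₀ else r₀^(2*n-1-(j : ℕ)))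
            = ∑ j : Fin (2*(n-1)), F (j : ℕ) :=
              Finset.sum_congr rfl (fun j _ => hterm j)
          _ = ∑ j ∈ Finset.range (2*(n-1)), F j := Fin.sum_univ_eq_sum_range F (2*(n-1))
          _ = 0 := by
              rw [sum_range_split1 (2*(n-1)) (by omega) F,
                show 2*(n-1)-1 = 2*n-3 by omega]
              have hS : ∑ j ∈ Finset.range (2*(n-1)-1), F j
                  = ∑ j ∈ Finset.range (2*(n-1)-1), e j * r₀^(2*n-1-j) := by
                refine Finset.sum_congr rfl ?_
                intro j hj
                simp only [Finset.mem_range] at hj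
                have hne : j ≠ 2*n-3 := by omega
                rw [hF]
                simp only [hne, if_false]
              rw [show (2*(n-1):ℕ)-1 = 2*n-3 by omega] at hS
              rw [hS]
              simp only [hF, eq_self_iff_true, if_true]
              rw [sum_range_split3 (2*n) (by omega) (fun j => e j * r₀^(2*n-1-j))] at hrow
              have he1 : e (2*n-1) = 0 := by
                rw [he]
                simp only
                rw [if_neg (by omega)]
              have hp1 : 2*n-1-(2*n-3) = 2 := by omega
              have hp2 : 2*n-1-(2*n-2) = 1 := by omega
              have hp3 : 2*n-1-(2*n-1) = 0 := by omega
              rw [he1, hp1, hp2, hp3] at hrow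
              simp only [pow_one, pow_zero, zero_mul, add_zero] at hrow
              nlinarith [hrow]
  have key : r₀ * M₁.det + M₂.det = 0 := by rw [← hsplit]; exact hDzero
  rw [hlead] at hminor
  rw [hlead, htilde]
  constructor
  · linarith
  · have h1 : M₂.det = -(r₀ * M₁.det) := by linarith
    rw [h1]
    field_simp
end
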